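/- arXiv:1804.06071 — 2 statements merged into one kernel-verified Lean document; each statement's English description precedes it below -/
import Mathlib

section
/- The set of permutations of [n] avoiding 132 and 321 consists exactly of the permutations π_{k,ℓ,n−k−ℓ} for integers k, ℓ ≥ 1 with k+ℓ ≤ n, together with the identity permutation; consequently |S_n(132,321)| = binomial(n,2) + 1. -/
/-- An occurrence of the pattern `σ` in `π` is a strictly increasing choice of
indices whose images under `π` are order-isomorphic to `σ`. -/
def IsOccurrence {m n : ℕ} (σ : Equiv.Perm (Fin m)) (π : Equiv.Perm (Fin n))
    (f : Fin m → Fin n) : Prop :=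
  StrictMono f ∧ ∀ j k : Fin m, π (f j) < π (f k) ↔ σ j < σ k

/-- `numOcc σ π` is the number of occurrences of the pattern `σ` in `π`. -/
noncomputable def numOcc {m n : ℕ} (σ : Equiv.Perm (Fin m)) (π : Equiv.Perm (Fin n)) : ℕ :=
  Nat.card {f : Fin m → Fin n // IsOccurrence σ π f}

def p123 : Equiv.Perm (Fin 3) := 1
def p132 : Equiv.Perm (Fin 3) := Equiv.swap 1 2
def p213 : Equiv.Perm (Fin 3) := Equiv.swap 0 1
def p321 : Equiv.Perm (Fin 3) := Equiv.swap 0 2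
def p231 : Equiv.Perm (Fin 3) := finRotate 3
def p312 : Equiv.Perm (Fin 3) := (finRotate 3)⁻¹

/-- The composition (direct sum) `σ * τ` of two permutations. -/
def permComp {m n : ℕ} (σ : Equiv.Perm (Fin m)) (τ : Equiv.Perm (Fin n)) :
    Equiv.Perm (Fin (m + n)) :=
  Equiv.permCongr finSumFinEquiv (Equiv.sumCongr σ τ)

/-- Permutations of arbitrary (finite) length. -/
def SPerm := Σ n : ℕ, Equiv.Perm (Fin n)

def SPerm.comp (p q : SPerm) : SPerm := ⟨p.1 + q.1, permComp p.2 q.2⟩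

/-- The permutation `(ℓ+1, …, ℓ+k, 1, …, ℓ)` of `[k+ℓ]`. -/
def rotBlock (k ℓ : ℕ) : Equiv.Perm (Fin (k + ℓ)) :=
  finSumFinEquiv.symm.trans ((Equiv.sumComm (Fin k) (Fin ℓ)).trans
    (finSumFinEquiv.trans (finCongr (Nat.add_comm ℓ k))))

/-- The permutation `(ℓ+1, …, ℓ+k, 1, …, ℓ, k+ℓ+1, …, k+ℓ+m)` of `[k+ℓ+m]`. -/
def piKLM (k ℓ m : ℕ) : Equiv.Perm (Fin (k + ℓ + m)) :=
  permComp (rotBlock k ℓ) (1 : Equiv.Perm (Fin m))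



lemma numOcc_zero_iff {m n : ℕ} (σ : Equiv.Perm (Fin m)) (π : Equiv.Perm (Fin n)) :
    numOcc σ π = 0 ↔ ∀ f, ¬ IsOccurrence σ π f := by
  unfold numOcc
  rw [Nat.card_eq_zero]
  constructor
  · rintro (h | h) f hf
    · exact h.elim' ⟨f, hf⟩
    · exact absurd (inferInstance : Finite {f : Fin m → Fin n // IsOccurrence σ π f}) h.not_finite
  · intro h
    exact Or.inl ⟨fun x => h x.1 x.2⟩

lemma strictMono_triple {n : ℕ} (a b c : Fin n) (hab : a < b) (hbc : b < c) :
    StrictMono ![a, b, c] := by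
  intro i j hij
  fin_cases i <;> fin_cases j <;> simp_all <;>
    first
      | exact hab
      | exact hbc
      | exact hab.trans hbc
      | exact absurd hij (by decide)

lemma avoid132_iff {n : ℕ} (π : Equiv.Perm (Fin n)) :
    numOcc p132 π = 0 ↔
      ∀ a b c : Fin n, a < b → b < c → ¬ (π a < π c ∧ π c < π b) := by
  rw [numOcc_zero_iff]
  constructor
  · intro h a b c hab hbc ⟨h1, h2⟩
    have h3 : π a < π b := h1.trans h2
    apply h ![a, b, c]
    refine ⟨strictMono_triple a b c hab hbc, ?_⟩
    have e0 : p132 0 = 0 := by decide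
    have e1 : p132 1 = 2 := by decide
    have e2 : p132 2 = 1 := by decide
    intro j k
    fin_cases j <;> fin_cases k <;>
      simp [e0, e1, e2] <;>
      first
        | exact h1 | exact h2 | exact h3
        | exact fun hh => absurd hh (by first | exact h1.asymm | exact h2.asymm | exact h3.asymm)
        | exact h1.le | exact h2.le | exact h3.le
  · intro h f ⟨hm, hval⟩
    refine h (f 0) (f 1) (f 2) (hm (by decide)) (hm (by decide)) ⟨?_, ?_⟩
    · exact (hval 0 2).2 (by decide)
    · exact (hval 2 1).2 (by decide)

lemma avoid321_iff {n : ℕ} (π : Equiv.Perm (Fin n)) :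
    numOcc p321 π = 0 ↔
      ∀ a b c : Fin n, a < b → b < c → ¬ (π b < π a ∧ π c < π b) := by
  rw [numOcc_zero_iff]
  constructor
  · intro h a b c hab hbc ⟨h1, h2⟩
    have h3 : π c < π a := h2.trans h1
    apply h ![a, b, c]
    refine ⟨strictMono_triple a b c hab hbc, ?_⟩
    have e0 : p321 0 = 2 := by decide
    have e1 : p321 1 = 1 := by decide
    have e2 : p321 2 = 0 := by decide
    intro j k
    fin_cases j <;> fin_cases k <;>
      simp [e0, e1, e2] <;>
      first
        | exact h1 | exact h2 | exact h3
        | exact fun hh => absurd hh (by first | exact h1.asymm | exact h2.asymm | exact h3.asymm)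
        | exact h1.le | exact h2.le | exact h3.le
  · intro h f ⟨hm, hval⟩
    refine h (f 0) (f 1) (f 2) (hm (by decide)) (hm (by decide)) ⟨?_, ?_⟩
    · exact (hval 1 0).2 (by decide)
    · exact (hval 2 1).2 (by decide)

lemma steps_le (g : ℕ → ℕ) (N : ℕ) (h : ∀ s, s + 1 < N → g s < g (s+1)) :
    ∀ d s, s + d < N → g s + d ≤ g (s + d) := by
  intro d
  induction d with
  | zero => simp
  | succ d ih =>
    intro s hs
    have h1 := ih s (by omega)
    have h2 := h (s+d) (by omega)
    have h3 : s + (d+1) = s + d + 1 := by omega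
    rw [h3]
    omega

section
variable {n : ℕ} (π : Equiv.Perm (Fin n))

lemma fix_of_fix_zero
    (h132 : ∀ a b c : Fin n, a < b → b < c → ¬ (π a < π c ∧ π c < π b))
    (hn : 0 < n) (hz : π ⟨0, hn⟩ = ⟨0, hn⟩) : π = Equiv.refl (Fin n) := by
  have key : ∀ v : ℕ, ∀ hv : v < n, π ⟨v, hv⟩ = ⟨v, hv⟩ := by
    intro v
    induction v using Nat.strong_induction_on with
    | _ v ih =>
    intro hv
    by_contra hne'
    rcases Nat.eq_zero_or_pos v with h0 | hpos
    · subst h0; exact hne' hz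
    · have hge : v < (π ⟨v, hv⟩).val := by
        rcases lt_trichotomy ((π ⟨v, hv⟩).val) v with h | h | h
        · exfalso
          have h2 := ih _ h ((π ⟨v, hv⟩).isLt)
          have h3 : π ⟨(π ⟨v, hv⟩).val, (π ⟨v, hv⟩).isLt⟩ = π ⟨v, hv⟩ := by
            rw [h2]
          have := π.injective h3
          rw [Fin.ext_iff] at this
          simp at this
          omega
        · exact absurd (Fin.ext h) hne'
        · exact h
      have hc : v < ((π.symm) ⟨v, hv⟩).val := by
        rcases lt_trichotomy (((π.symm) ⟨v, hv⟩).val) v with h | h | h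
        · exfalso
          have h2 := ih _ h ((π.symm ⟨v, hv⟩).isLt)
          simp only [Fin.eta] at h2
          have h3 : π (π.symm ⟨v, hv⟩) = ⟨v, hv⟩ := π.apply_symm_apply _
          rw [h2] at h3
          rw [Fin.ext_iff] at h3
          simp at h3
          omega
        · exfalso
          have h3 : π (π.symm ⟨v, hv⟩) = ⟨v, hv⟩ := π.apply_symm_apply _
          have h4 : (π.symm ⟨v,hv⟩) = ⟨v, hv⟩ := Fin.ext h
          rw [h4] at h3
          exact hne' h3
        · exact h
      refine h132 ⟨0, hn⟩ ⟨v, hv⟩ (π.symm ⟨v, hv⟩) ?_ ?_ ⟨?_, ?_⟩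
      · exact hpos
      · exact hc
      · rw [hz, π.apply_symm_apply]
        exact hpos
      · rw [π.apply_symm_apply]
        exact hge
  refine Equiv.ext fun i => ?_
  have := key i.val i.isLt
  simpa using this

lemma structure_of_avoid
    (h132 : ∀ a b c : Fin n, a < b → b < c → ¬ (π a < π c ∧ π c < π b))
    (h321 : ∀ a b c : Fin n, a < b → b < c → ¬ (π b < π a ∧ π c < π b))
    (hne : π ≠ Equiv.refl (Fin n)) :
    ∃ k ℓ : ℕ, 1 ≤ k ∧ 1 ≤ ℓ ∧ k + ℓ ≤ n ∧
      ∀ i : Fin n, (π i : ℕ) =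
        if (i : ℕ) < k then ℓ + i else if (i : ℕ) < k + ℓ then (i : ℕ) - k else i := by
  have hex : ∃ i, π i ≠ i := by
    by_contra h
    push_neg at h
    exact hne (Equiv.ext h)
  obtain ⟨i0, hi0⟩ := hex
  have hn : 0 < n := i0.pos
  set z : Fin n := ⟨0, hn⟩ with hzdef
  have hπz : π z ≠ z := fun h => hne (fix_of_fix_zero π h132 hn h)
  set ℓ : ℕ := (π z).val with hℓdef
  have hℓ : 1 ≤ ℓ := by
    rcases Nat.eq_zero_or_pos ℓ with h | h
    · exact absurd (Fin.ext h) hπz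
    · exact h
  set K : Fin n := π.symm z with hKdef
  have hπK : π K = z := π.apply_symm_apply z
  set k : ℕ := K.val with hkdef
  have hk : 1 ≤ k := by
    rcases Nat.eq_zero_or_pos k with h | h
    · exfalso
      have : K = z := Fin.ext h
      rw [this] at hπK
      exact hπz hπK
    · exact h
  have hpos : ∀ j : Fin n, j ≠ K → 0 < (π j).val := by
    intro j hj
    rcases Nat.eq_zero_or_pos (π j).val with h | h
    · exfalso
      have h1 : π j = z := Fin.ext h
      have : π j = π K := by rw [h1, hπK]
      exact hj (π.injective this)
    · exact h
  have stepA : ∀ i j : Fin n, i < j → j < K → π i < π j := by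
    intro i j hij hjK
    by_contra h
    push_neg at h
    have h' : π j < π i := lt_of_le_of_ne h fun e => absurd (π.injective e) (ne_of_gt hij)
    have hKj : π K < π j := by
      rw [hπK, Fin.lt_def]
      exact hpos j (ne_of_lt hjK)
    exact h321 i j K hij hjK ⟨h', hKj⟩
  have stepB : ∀ i j : Fin n, K ≤ i → i < j → π i < π j := by
    intro i j hKi hij
    rcases eq_or_lt_of_le hKi with h | h
    · rw [← h, hπK, Fin.lt_def]
      exact hpos j (ne_of_gt (h ▸ hij))
    · by_contra hcon
      push_neg at hcon
      have h' : π j < π i := lt_of_le_of_ne hcon fun e => absurd (π.injective e) (ne_of_gt hij)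
      have hKj : π K < π j := by
        rw [hπK, Fin.lt_def]
        exact hpos j (ne_of_gt (h.trans hij))
      exact h132 K i j h hij ⟨hKj, h'⟩
  have stepC : ∀ i : Fin n, (i : ℕ) < k → ℓ ≤ (π i).val := by
    intro i hi
    rcases Nat.eq_zero_or_pos i.val with h | h
    · have : i = z := Fin.ext h
      rw [this]
    · have : π z < π i := stepA z i (by rwa [Fin.lt_def]) (by rwa [Fin.lt_def])
      rw [Fin.lt_def] at this
      omega
  have hℓn : ℓ < n := (π z).isLt
  have stepD : ∀ t, t < ℓ → ∀ ht : t < n, ((π.symm) ⟨t, ht⟩).val = k + t := by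
    intro t
    induction t using Nat.strong_induction_on with
    | _ t ih =>
    intro htℓ ht
    have hπq : π (π.symm ⟨t, ht⟩) = ⟨t, ht⟩ := π.apply_symm_apply _
    have hq1 : k ≤ (π.symm ⟨t, ht⟩).val := by
      by_contra h
      push_neg at h
      have h2 := stepC (π.symm ⟨t, ht⟩) h
      rw [hπq] at h2
      simp at h2
      omega
    have hq2 : ¬ ((π.symm ⟨t, ht⟩).val < k + t) := by
      intro h
      have hs : (π.symm ⟨t, ht⟩).val - k < t := by omega
      have ihs := ih _ hs (by omega) (by omega)
      have he : π.symm ⟨(π.symm ⟨t, ht⟩).val - k, by omega⟩ = π.symm ⟨t, ht⟩ :=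
        Fin.ext (by rw [ihs]; omega)
      have h2 := congrArg π he
      rw [π.apply_symm_apply, hπq] at h2
      simp only [Fin.mk.injEq] at h2
      omega
    have hq3 : ¬ (k + t < (π.symm ⟨t, ht⟩).val) := by
      intro h
      have hlt : k + t < n := lt_trans h (π.symm ⟨t, ht⟩).isLt
      have hb : π ⟨k + t, hlt⟩ < π (π.symm ⟨t, ht⟩) := by
        apply stepB
        · rw [Fin.le_def]
          simp
          omega
        · rw [Fin.lt_def]
          simpa using h
      rw [hπq, Fin.lt_def] at hb
      have hv : (π ⟨k + t, hlt⟩).val < t := by simpa using hb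
      have ihs := ih _ hv (by omega) ((π ⟨k + t, hlt⟩).isLt)
      have he : π.symm ⟨(π ⟨k + t, hlt⟩).val, (π ⟨k + t, hlt⟩).isLt⟩ = ⟨k + t, hlt⟩ := by
        simp
      rw [he] at ihs
      simp only [Fin.val_mk] at ihs
      omega
    omega
  have hkℓn : k + ℓ ≤ n := by
    have h1 : ℓ - 1 < n := by omega
    have := stepD (ℓ - 1) (by omega) h1
    have h2 := (π.symm ⟨ℓ - 1, h1⟩).isLt
    omega
  have stepD' : ∀ t, t < ℓ → ∀ h2 : k + t < n, (π ⟨k + t, h2⟩).val = t := by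
    intro t htℓ h2
    have htn : t < n := by omega
    have hD := stepD t htℓ htn
    have he : π.symm ⟨t, htn⟩ = ⟨k + t, h2⟩ := Fin.ext (by rw [hD])
    have h3 := congrArg π he
    rw [π.apply_symm_apply] at h3
    rw [← h3]
  have stepE : ∀ i j : Fin n, (i : ℕ) < k → k + ℓ ≤ (j : ℕ) → π i < π j := by
    intro i j hi hj
    have hjℓ : ℓ < (π j).val := by
      rcases lt_trichotomy ((π j).val) ℓ with h | h | h
      · exfalso
        have := stepD (π j).val h ((π j).isLt)
        have he : π.symm ⟨(π j).val, (π j).isLt⟩ = j := by simp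
        rw [he] at this
        omega
      · exfalso
        have h1 : π j = π z := Fin.ext (by rw [h])
        have := π.injective h1
        rw [Fin.ext_iff] at this
        simp [hzdef] at this
        omega
      · exact h
    rcases Nat.eq_zero_or_pos i.val with h0 | h0
    · have : i = z := Fin.ext h0
      rw [this, Fin.lt_def]
      omega
    · by_contra hcon
      push_neg at hcon
      have h' : π j < π i := lt_of_le_of_ne hcon
        fun e => absurd (π.injective e) (by rw [Fin.ext_iff]; omega)
      refine h132 z i j (by rw [Fin.lt_def]; exact h0) (by rw [Fin.lt_def]; omega) ⟨?_, h'⟩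
      rw [Fin.lt_def]
      omega
  set N : ℕ := n - ℓ with hNdef
  have hkN : k ≤ N := by omega
  set g : ℕ → ℕ := fun s =>
    if h : (if s < k then s else s + ℓ) < n then (π ⟨(if s < k then s else s + ℓ), h⟩).val else 0
    with hgdef
  have gev1 : ∀ s (hsk : s < k) (h2 : s < n), g s = (π ⟨s, h2⟩).val := by
    intro s hsk h2
    simp only [hgdef, if_pos hsk, dif_pos h2]
  have gev2 : ∀ s (hsk : ¬ s < k) (h2 : s + ℓ < n), g s = (π ⟨s + ℓ, h2⟩).val := by
    intro s hsk h2
    simp only [hgdef, if_neg hsk, dif_pos h2]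
  have hadj : ∀ s, s + 1 < N → g s < g (s+1) := by
    intro s hs
    rcases lt_trichotomy (s+1) k with h | h | h
    · have p1 : s < n := by omega
      have p2 : s+1 < n := by omega
      rw [gev1 s (by omega) p1, gev1 (s+1) h p2]
      have := stepA ⟨s, p1⟩ ⟨s+1, p2⟩ (by rw [Fin.lt_def]; simp) (by rw [Fin.lt_def]; simp; omega)
      rwa [Fin.lt_def] at this
    · have p1 : s < n := by omega
      have p2 : s+1+ℓ < n := by omega
      rw [gev1 s (by omega) p1, gev2 (s+1) (by omega) p2]
      have := stepE ⟨s, p1⟩ ⟨s+1+ℓ, p2⟩ (by simp only [Fin.val_mk]; omega)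
        (by simp only [Fin.val_mk]; omega)
      rwa [Fin.lt_def] at this
    · have p1 : s+ℓ < n := by omega
      have p2 : s+1+ℓ < n := by omega
      rw [gev2 s (by omega) p1, gev2 (s+1) (by omega) p2]
      have := stepB ⟨s+ℓ, p1⟩ ⟨s+1+ℓ, p2⟩ (by rw [Fin.le_def]; simp only [Fin.val_mk]; omega)
        (by rw [Fin.lt_def]; simp only [Fin.val_mk]; omega)
      rwa [Fin.lt_def] at this
  have hg0 : g 0 = ℓ := by
    rw [gev1 0 (by omega) hn]
  have hgval : ∀ s, s < N → g s = ℓ + s := by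
    intro s hsN
    have hlow := steps_le g N hadj s 0 (by omega)
    rw [hg0] at hlow
    simp only [Nat.zero_add] at hlow
    have hhigh := steps_le g N hadj (N - 1 - s) s (by omega)
    have he : s + (N - 1 - s) = N - 1 := by omega
    rw [he] at hhigh
    have hgN : g (N - 1) ≤ n - 1 := by
      rcases lt_or_ge (N-1) k with h | h
      · have p : N-1 < n := by omega
        rw [gev1 _ h p]
        have := (π ⟨N-1, p⟩).isLt
        omega
      · have p : N-1+ℓ < n := by omega
        rw [gev2 _ (by omega) p]
        have := (π ⟨N-1+ℓ, p⟩).isLt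
        omega
    omega
  refine ⟨k, ℓ, hk, hℓ, hkℓn, ?_⟩
  intro i
  rcases lt_trichotomy (i.val) k with h | h | h
  · have h1 : g i.val = (π ⟨i.val, i.isLt⟩).val := gev1 i.val h i.isLt
    have h2 := hgval i.val (by omega)
    rw [if_pos h]
    rw [h1] at h2
    simpa using h2
  · rw [if_neg (by omega), if_pos (by omega)]
    have p : k + 0 < n := by omega
    have := stepD' 0 (by omega) p
    have he : (⟨k + 0, p⟩ : Fin n) = i := Fin.ext (by simp; omega)
    rw [he] at this
    omega
  · rcases lt_or_ge (i.val) (k + ℓ) with h2 | h2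
    · rw [if_neg (by omega), if_pos h2]
      have p : k + (i.val - k) < n := by omega
      have := stepD' (i.val - k) (by omega) p
      have he : (⟨k + (i.val - k), p⟩ : Fin n) = i := Fin.ext (by simp; omega)
      rw [he] at this
      omega
    · rw [if_neg (by omega), if_neg (by omega)]
      have hsN : i.val - ℓ < N := by omega
      have p : (i.val - ℓ) + ℓ < n := by omega
      have h1 : g (i.val - ℓ) = (π ⟨i.val - ℓ + ℓ, p⟩).val := gev2 _ (by omega) p
      have he : (⟨i.val - ℓ + ℓ, p⟩ : Fin n) = i := Fin.ext (by simp; omega)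
      rw [he] at h1
      have h3 := hgval (i.val - ℓ) hsN
      rw [h1] at h3
      omega

end


lemma rotBlock_val (k ℓ : ℕ) (x : Fin (k + ℓ)) :
    ((rotBlock k ℓ) x : ℕ) = if (x:ℕ) < k then ℓ + x else (x:ℕ) - k := by
  rcases lt_or_ge (x:ℕ) k with h | h
  · rw [if_pos h]
    have hx : x = Fin.castAdd ℓ ⟨x, h⟩ := Fin.ext rfl
    rw [rotBlock, hx]
    simp only [Equiv.trans_apply, finSumFinEquiv_symm_apply_castAdd, Equiv.sumComm_apply,
      Sum.swap_inl, finSumFinEquiv_apply_right, finCongr_apply, Fin.coe_cast, Fin.coe_natAdd]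
    simp
  · rw [if_neg (not_lt.mpr h)]
    have hx : x = Fin.natAdd k ⟨x - k, by omega⟩ := Fin.ext (by simp; omega)
    rw [rotBlock, hx]
    simp only [Equiv.trans_apply, finSumFinEquiv_symm_apply_natAdd, Equiv.sumComm_apply,
      Sum.swap_inr, finSumFinEquiv_apply_left, finCongr_apply, Fin.coe_cast, Fin.coe_castAdd]
    simp

lemma piKLM_val (k ℓ m : ℕ) (i : Fin (k + ℓ + m)) :
    ((piKLM k ℓ m) i : ℕ) =
      if (i:ℕ) < k then ℓ + i else if (i:ℕ) < k + ℓ then (i:ℕ) - k else i := by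
  rcases lt_or_ge (i:ℕ) (k + ℓ) with h | h
  · have hx : i = Fin.castAdd m ⟨i, h⟩ := Fin.ext rfl
    rw [piKLM, permComp, hx]
    simp only [Equiv.permCongr_apply, Equiv.symm_apply_apply,
      finSumFinEquiv_symm_apply_castAdd, Equiv.sumCongr_apply, Sum.map_inl,
      finSumFinEquiv_apply_left, Fin.coe_castAdd]
    rw [rotBlock_val]
    simp only [Fin.val_mk]
    split_ifs <;> omega
  · have hx : i = Fin.natAdd (k + ℓ) ⟨i - (k + ℓ), by omega⟩ := Fin.ext (by simp; omega)
    rw [if_neg (by omega), if_neg (by omega), piKLM, permComp, hx]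
    simp only [Equiv.permCongr_apply, Equiv.symm_apply_apply,
      finSumFinEquiv_symm_apply_natAdd, Equiv.sumCongr_apply, Sum.map_inr,
      Equiv.Perm.coe_one, id_eq, finSumFinEquiv_apply_right, Fin.coe_natAdd]

lemma form_val {n : ℕ} (k ℓ m : ℕ) (h : k + ℓ + m = n) (i : Fin n) :
    (((finCongr h).permCongr (piKLM k ℓ m)) i : ℕ) =
      if (i:ℕ) < k then ℓ + i else if (i:ℕ) < k + ℓ then (i:ℕ) - k else i := by
  have he : ((finCongr h).permCongr (piKLM k ℓ m)) i
      = finCongr h ((piKLM k ℓ m) ((finCongr h).symm i)) := rfl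
  rw [he]
  have h1 : ((finCongr h ((piKLM k ℓ m) ((finCongr h).symm i))) : ℕ)
      = (((piKLM k ℓ m) ((finCongr h).symm i)) : ℕ) := by simp
  rw [h1, piKLM_val]
  have h2 : (((finCongr h).symm i) : ℕ) = (i : ℕ) := by simp
  rw [h2]

section
variable {n : ℕ}

lemma form_avoids (π : Equiv.Perm (Fin n)) (k ℓ : ℕ)
    (hval : ∀ i : Fin n, (π i : ℕ) =
      if (i:ℕ) < k then ℓ + i else if (i:ℕ) < k + ℓ then (i:ℕ) - k else i) :
    (∀ a b c : Fin n, a < b → b < c → ¬(π a < π c ∧ π c < π b)) ∧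
    (∀ a b c : Fin n, a < b → b < c → ¬(π b < π a ∧ π c < π b)) := by
  constructor <;>
  · intro a b c hab hbc ⟨h1, h2⟩
    have ha := hval a
    have hb := hval b
    have hc := hval c
    rw [Fin.lt_def] at hab hbc h1 h2
    split_ifs at ha hb hc <;> omega

end

def Fperm (n : ℕ) (p : ℕ × ℕ) : Equiv.Perm (Fin n) :=
  if h : p.1 + p.2 ≤ n then
    (finCongr (by omega : p.1 + p.2 + (n - p.1 - p.2) = n)).permCongr
      (piKLM p.1 p.2 (n - p.1 - p.2))
  else 1

def Tf (n : ℕ) : Finset (ℕ × ℕ) :=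
  (Finset.range (n+1) ×ˢ Finset.range (n+1)).filter
    fun p => 1 ≤ p.1 ∧ 1 ≤ p.2 ∧ p.1 + p.2 ≤ n

lemma card_Tf (n : ℕ) : (Tf n).card = n.choose 2 := by
  have h : (Tf n).card = ((Finset.range n).sigma fun b => Finset.range b).card := by
    apply Finset.card_nbij (fun p => ⟨p.1 + p.2 - 1, p.2 - 1⟩)
    · intro p hp
      simp only [Tf, Finset.mem_coe, Finset.mem_filter, Finset.mem_product, Finset.mem_range] at hp
      simp only [Finset.mem_coe, Finset.mem_sigma, Finset.mem_range]
      omega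
    · intro p hp q hq he
      simp only [Tf, Finset.mem_coe, Finset.mem_filter, Finset.mem_product,
        Finset.mem_range] at hp hq
      simp only [Sigma.mk.inj_iff, heq_eq_eq] at he
      have : p.1 = q.1 ∧ p.2 = q.2 := by omega
      exact Prod.ext this.1 this.2
    · intro x hx
      simp only [Finset.coe_sigma, Set.mem_sigma_iff, Finset.mem_coe,
        Finset.mem_range] at hx
      refine ⟨(x.1 - x.2, x.2 + 1), ?_, ?_⟩
      · simp only [Finset.mem_coe, Tf, Finset.mem_filter, Finset.mem_product,
          Finset.mem_range]
        omega
      · obtain ⟨b, a⟩ := x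
        simp only at hx ⊢
        have h1 : b - a + (a + 1) - 1 = b := by omega
        have h2 : a + 1 - 1 = a := by omega
        simp [h1, h2]
  rw [h, Finset.card_sigma]
  simp only [Finset.card_range]
  rw [Finset.sum_range_id, Nat.choose_two_right]

lemma Fperm_val (n : ℕ) (p : ℕ × ℕ) (hp : p.1 + p.2 ≤ n) (i : Fin n) :
    ((Fperm n p) i : ℕ) =
      if (i:ℕ) < p.1 then p.2 + i else if (i:ℕ) < p.1 + p.2 then (i:ℕ) - p.1 else i := by
  rw [Fperm, dif_pos hp, form_val]

lemma charac (n : ℕ) (π : Equiv.Perm (Fin n)) :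
    (numOcc p132 π = 0 ∧ numOcc p321 π = 0) ↔
      (π = Equiv.refl (Fin n) ∨
        ∃ k ℓ m : ℕ, 1 ≤ k ∧ 1 ≤ ℓ ∧ ∃ h : k + ℓ + m = n,
          π = (finCongr h).permCongr (piKLM k ℓ m)) := by
  rw [avoid132_iff, avoid321_iff]
  constructor
  · intro ⟨h132, h321⟩
    by_cases hr : π = Equiv.refl (Fin n)
    · exact Or.inl hr
    · obtain ⟨k, ℓ, hk, hℓ, hkl, hval⟩ := structure_of_avoid π h132 h321 hr
      refine Or.inr ⟨k, ℓ, n - k - ℓ, hk, hℓ, by omega, ?_⟩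
      refine Equiv.ext fun i => Fin.ext ?_
      rw [form_val, hval]
  · rintro (hr | ⟨k, ℓ, m, hk, hℓ, h, heq⟩)
    · subst hr
      exact form_avoids _ 0 0 (fun i => by simp)
    · subst heq
      exact form_avoids _ k ℓ (fun i => form_val k ℓ m h i)

lemma mem_Sf (n : ℕ) (π : Equiv.Perm (Fin n)) :
    (numOcc p132 π = 0 ∧ numOcc p321 π = 0) ↔
      π ∈ insert (Equiv.refl (Fin n)) ((Tf n).image (Fperm n)) := by
  rw [charac, Finset.mem_insert, Finset.mem_image]
  apply or_congr Iff.rfl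
  constructor
  · rintro ⟨k, ℓ, m, hk, hℓ, h, heq⟩
    have hm : m = n - k - ℓ := by omega
    subst hm
    refine ⟨(k, ℓ), ?_, ?_⟩
    · simp only [Tf, Finset.mem_filter, Finset.mem_product, Finset.mem_range]
      omega
    · rw [Fperm, dif_pos (by omega : (k, ℓ).1 + (k, ℓ).2 ≤ n)]
      exact heq.symm
  · rintro ⟨p, hp, heq⟩
    simp only [Tf, Finset.mem_filter, Finset.mem_product, Finset.mem_range] at hp
    refine ⟨p.1, p.2, n - p.1 - p.2, hp.2.1, hp.2.2.1, by omega, ?_⟩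
    rw [← heq, Fperm, dif_pos hp.2.2.2]

lemma refl_not_mem (n : ℕ) : Equiv.refl (Fin n) ∉ (Tf n).image (Fperm n) := by
  rw [Finset.mem_image]
  rintro ⟨p, hp, heq⟩
  simp only [Tf, Finset.mem_filter, Finset.mem_product, Finset.mem_range] at hp
  have hn : 0 < n := by omega
  have := Fperm_val n p hp.2.2.2 ⟨0, hn⟩
  rw [heq] at this
  simp only [Equiv.refl_apply] at this
  rw [if_pos (by have := hp.2.1; simp; omega)] at this
  simp at this
  omega

lemma Fperm_injOn (n : ℕ) : Set.InjOn (Fperm n) (Tf n) := by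
  intro p hp q hq he
  simp only [Finset.mem_coe, Tf, Finset.mem_filter, Finset.mem_product,
    Finset.mem_range] at hp hq
  have hn : 0 < n := by omega
  have h0p := Fperm_val n p hp.2.2.2 ⟨0, hn⟩
  have h0q := Fperm_val n q hq.2.2.2 ⟨0, hn⟩
  rw [he] at h0p
  rw [h0p] at h0q
  simp only [Fin.val_mk] at h0q
  rw [if_pos (by omega), if_pos (by omega)] at h0q
  -- h0q : q.2 + 0 = p.2 + 0  (or similar)
  have hℓ : p.2 = q.2 := by omega
  have hpn : p.1 < n := by omega
  have h1p := Fperm_val n p hp.2.2.2 ⟨p.1, hpn⟩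
  have h1q := Fperm_val n q hq.2.2.2 ⟨p.1, hpn⟩
  rw [he] at h1p
  rw [h1p] at h1q
  simp only [Fin.val_mk] at h1q
  rw [if_neg (by omega), if_pos (by omega)] at h1q
  split_ifs at h1q <;> [skip; skip; skip] <;> try omega
  exact Prod.ext (by omega) hℓ

theorem counting (n : ℕ) :
    Nat.card {π : Equiv.Perm (Fin n) // numOcc p132 π = 0 ∧ numOcc p321 π = 0} =
      n.choose 2 + 1 := by
  have e := Equiv.subtypeEquivRight (fun π => mem_Sf n π)
  rw [Nat.card_congr e, Nat.card_eq_fintype_card, Fintype.card_coe,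
    Finset.card_insert_of_notMem (refl_not_mem n),
    Finset.card_image_of_injOn (Fperm_injOn n), card_Tf]


theorem avoid_132_321_characterization (n : ℕ) :
    (∀ π : Equiv.Perm (Fin n),
      (numOcc p132 π = 0 ∧ numOcc p321 π = 0) ↔
        (π = Equiv.refl (Fin n) ∨
          ∃ k ℓ m : ℕ, 1 ≤ k ∧ 1 ≤ ℓ ∧ ∃ h : k + ℓ + m = n,
            π = (finCongr h).permCongr (piKLM k ℓ m))) ∧
    Nat.card {π : Equiv.Perm (Fin n) // numOcc p132 π = 0 ∧ numOcc p321 π = 0} =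
      n.choose 2 + 1 := by
  exact ⟨charac n, counting n⟩
end

section
/- A permutation π avoids all three patterns 231, 312, and 321 if and only if every block in its decomposition into indecomposable permutations is decreasing of length at most 2, i.e., each block is either 1 or 21. -/
set_option linter.all false

lemma permComp_val {m k : ℕ} (σ : Equiv.Perm (Fin m)) (τ : Equiv.Perm (Fin k))
    (x : Fin (m + k)) :
    (permComp σ τ x).val =
      if h : x.val < m then (σ ⟨x.val, h⟩).val
      else m + (τ ⟨x.val - m, by omega⟩).val := by
  unfold permComp
  rw [Equiv.permCongr_apply]
  by_cases h : x.val < m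
  · have hx : finSumFinEquiv.symm x = Sum.inl ⟨x.val, h⟩ := by
      rw [Equiv.symm_apply_eq]; apply Fin.ext; simp
    rw [hx]; simp [h]
  · have hx : finSumFinEquiv.symm x = Sum.inr ⟨x.val - m, by omega⟩ := by
      rw [Equiv.symm_apply_eq]; apply Fin.ext; simp; omega
    rw [hx]; simp [h]

lemma decomp {n m k : ℕ} (h : n = m + k) (π : Equiv.Perm (Fin n))
    (hm : ∀ j : Fin n, j.val < m ↔ (π j).val < m) :
    ∃ (σ : Equiv.Perm (Fin m)) (τ : Equiv.Perm (Fin k)),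
      (∀ i : Fin m, (σ i).val = (π ⟨i.val, by omega⟩).val) ∧
      (∀ i : Fin k, (τ i).val + m = (π ⟨m + i.val, by omega⟩).val) ∧
      (⟨n, π⟩ : SPerm) = SPerm.comp ⟨m, σ⟩ ⟨k, τ⟩ := by
  subst h
  have hm' : ∀ j : Fin (m + k), (π⁻¹ j).val < m ↔ j.val < m := by
    intro j
    have := hm (π⁻¹ j)
    rwa [Equiv.Perm.inv_def, Equiv.apply_symm_apply] at this
  have hge : ∀ j : Fin (m + k), m ≤ j.val → m ≤ (π j).val := by
    intro j hj
    have := (hm j).not.1 (by omega)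
    omega
  have hge' : ∀ j : Fin (m + k), m ≤ j.val → m ≤ (π⁻¹ j).val := by
    intro j hj
    have := (hm' j).not.2 (by omega)
    omega
  let σ : Equiv.Perm (Fin m) :=
    { toFun := fun i => ⟨(π ⟨i.val, by omega⟩).val, (hm _).1 i.isLt⟩
      invFun := fun i => ⟨(π⁻¹ ⟨i.val, by omega⟩).val, (hm' _).2 i.isLt⟩
      left_inv := by
        intro i
        apply Fin.ext
        show (π⁻¹ ⟨(π ⟨i.val, _⟩).val, _⟩).val = i.val
        rw [Fin.eta, Equiv.Perm.inv_def, Equiv.symm_apply_apply]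
      right_inv := by
        intro i
        apply Fin.ext
        show (π ⟨(π⁻¹ ⟨i.val, _⟩).val, _⟩).val = i.val
        rw [Fin.eta, Equiv.Perm.inv_def, Equiv.apply_symm_apply] }
  let τ : Equiv.Perm (Fin k) :=
    { toFun := fun i => ⟨(π ⟨m + i.val, by omega⟩).val - m, by
        have h2 := hge ⟨m + i.val, by omega⟩ (by simp)
        have h3 := (π ⟨m + i.val, by omega⟩ : Fin (m+k)).isLt
        omega⟩
      invFun := fun i => ⟨(π⁻¹ ⟨m + i.val, by omega⟩).val - m, by
        have h2 := hge' ⟨m + i.val, by omega⟩ (by simp)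
        have h3 := (π⁻¹ ⟨m + i.val, by omega⟩ : Fin (m+k)).isLt
        omega⟩
      left_inv := by
        intro i
        apply Fin.ext
        show (π⁻¹ ⟨m + ((π ⟨m + i.val, _⟩).val - m), _⟩).val - m = i.val
        have h2 := hge ⟨m + i.val, by omega⟩ (by simp)
        have heq : (⟨m + ((π ⟨m + i.val, by omega⟩).val - m), by
            have := (π ⟨m + i.val, by omega⟩ : Fin (m+k)).isLt; omega⟩ : Fin (m+k))
            = π ⟨m + i.val, by omega⟩ := by apply Fin.ext; simp; omega
        rw [heq, Equiv.Perm.inv_def, Equiv.symm_apply_apply]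
        simp
      right_inv := by
        intro i
        apply Fin.ext
        show (π ⟨m + ((π⁻¹ ⟨m + i.val, _⟩).val - m), _⟩).val - m = i.val
        have h2 := hge' ⟨m + i.val, by omega⟩ (by simp)
        have heq : (⟨m + ((π⁻¹ ⟨m + i.val, by omega⟩).val - m), by
            have := (π⁻¹ ⟨m + i.val, by omega⟩ : Fin (m+k)).isLt; omega⟩ : Fin (m+k))
            = π⁻¹ ⟨m + i.val, by omega⟩ := by apply Fin.ext; simp only [Fin.val_mk]; omega
        rw [heq, Equiv.Perm.inv_def, Equiv.apply_symm_apply]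
        simp }
  have hτ : ∀ i : Fin k, (τ i).val + m = (π ⟨m + i.val, by omega⟩).val := by
    intro i
    show ((π ⟨m + i.val, _⟩).val - m) + m = _
    have h2 := hge ⟨m + i.val, by omega⟩ (by simp)
    omega
  refine ⟨σ, τ, fun i => rfl, hτ, ?_⟩
  have hπ : π = permComp σ τ := by
    apply Equiv.ext
    intro x
    apply Fin.ext
    rw [permComp_val]
    by_cases hx : x.val < m
    · rw [dif_pos hx]
      show (π x).val = (π ⟨x.val, _⟩).val
      rw [Fin.eta]
    · rw [dif_neg hx]
      have := hτ ⟨x.val - m, by omega⟩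
      have hxx : (⟨m + (x.val - m), by omega⟩ : Fin (m+k)) = x := by
        apply Fin.ext; simp; omega
      rw [hxx] at this
      omega
  exact congrArg (Sigma.mk (m+k)) hπ

def Qprop {n : ℕ} (π : Equiv.Perm (Fin n)) : Prop :=
  ∀ i k : Fin n, i.val + 2 ≤ k.val → (π i).val < (π k).val

def QS (p : SPerm) : Prop := Qprop p.2

lemma Qprop_permComp {m k : ℕ} {σ : Equiv.Perm (Fin m)} {τ : Equiv.Perm (Fin k)}
    (hσ : Qprop σ) (hτ : Qprop τ) : Qprop (permComp σ τ) := by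
  intro i j hij
  rw [permComp_val, permComp_val]
  have hσlt : ∀ x : Fin m, (σ x).val < m := fun x => (σ x).isLt
  by_cases hi : i.val < m <;> by_cases hj : j.val < m
  · rw [dif_pos hi, dif_pos hj]
    exact hσ ⟨i.val, hi⟩ ⟨j.val, hj⟩ (by simpa using hij)
  · rw [dif_pos hi, dif_neg hj]
    have := hσlt ⟨i.val, hi⟩
    omega
  · omega
  · rw [dif_neg hi, dif_neg hj]
    have := hτ ⟨i.val - m, by omega⟩ ⟨j.val - m, by omega⟩ (by simp; omega)
    omega

lemma QS_comp {p q : SPerm} (hp : QS p) (hq : QS q) : QS (SPerm.comp p q) :=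
  Qprop_permComp hp hq

lemma QS_small {p : SPerm} (hp : p.1 ≤ 2) : QS p := by
  intro i k hik
  have := k.isLt
  omega

lemma QS_foldr (L : List SPerm) (hL : ∀ q ∈ L, q.1 ≤ 2) :
    QS (L.foldr SPerm.comp ⟨0, 1⟩) := by
  induction L with
  | nil => exact QS_small (Nat.zero_le _)
  | cons a l ih =>
      show QS (SPerm.comp a (l.foldr SPerm.comp ⟨0, 1⟩))
      exact QS_comp (QS_small (hL a List.mem_cons_self))
        (ih fun q hq => hL q (List.mem_cons_of_mem a hq))

lemma exists_list : ∀ n : ℕ, ∀ π : Equiv.Perm (Fin n), Qprop π →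
    ∃ L : List SPerm,
      (∀ q ∈ L, 1 ≤ q.1 ∧ q.1 ≤ 2 ∧ q.2 = (Fin.revPerm : Equiv.Perm (Fin q.1))) ∧
      L.foldr SPerm.comp ⟨0, 1⟩ = ⟨n, π⟩ := by
  intro n
  induction n using Nat.strong_induction_on with
  | _ n ih =>
    match n with
    | 0 =>
      intro π _
      refine ⟨[], by simp, ?_⟩
      have hπ : π = 1 := Equiv.ext fun x => x.elim0
      rw [hπ]
      rfl
    | (k+1) =>
      intro π hQ
      have hz : ((0 : Fin (k+1)) : ℕ) = 0 := rfl
      by_cases h0 : (π 0).val = 0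
      · -- first block has size 1
        have hm : ∀ j : Fin (k+1), j.val < 1 ↔ (π j).val < 1 := by
          intro j
          constructor
          · intro hj
            have : j = 0 := Fin.ext (by omega)
            rw [this]; omega
          · intro hjj
            by_contra hc
            have hj0 : (π j).val = 0 := by omega
            have : π j = π 0 := Fin.ext (by omega)
            have := π.injective this
            rw [this] at hc
            exact hc (by norm_num)
        obtain ⟨σ, τ, hσ, hτ, heq⟩ := decomp (show k+1 = 1 + k by omega) π hm
        have hQτ : Qprop τ := by
          intro i j hij
          have h1 := hτ i
          have h2 := hτ j
          have := hQ ⟨1 + i.val, by omega⟩ ⟨1 + j.val, by omega⟩ (by simp; omega)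
          omega
        obtain ⟨L', hb, hf⟩ := ih k (by omega) τ hQτ
        refine ⟨⟨1, Fin.revPerm⟩ :: L', ?_, ?_⟩
        · rintro q hq
          rcases List.mem_cons.1 hq with rfl | hq
          · exact ⟨le_refl 1, by norm_num, rfl⟩
          · exact hb q hq
        · show SPerm.comp ⟨1, Fin.revPerm⟩ (L'.foldr SPerm.comp ⟨0, 1⟩) = _; rw [hf]
          have hσrev : σ = (Fin.revPerm : Equiv.Perm (Fin 1)) :=
            Equiv.ext fun x => Subsingleton.elim _ _
          rw [← hσrev]
          exact heq.symm
      · -- first block has size 2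
        have hk : 1 ≤ k := by
          by_contra hc
          have hk0 : k = 0 := by omega
          subst hk0
          have := (π 0).isLt
          omega
        have hone : ((1 : Fin (k+1)) : ℕ) = 1 := by rw [Fin.val_one']; exact Nat.mod_eq_of_lt (by omega)
        have hπ1 : (π 1).val = 0 := by
          set j := π⁻¹ 0 with hj
          have hj0 : π j = 0 := π.apply_symm_apply 0
          have hj0' : (π j).val = 0 := by rw [hj0]; exact hz
          have hjle : j.val ≤ 1 := by
            by_contra hc
            have := hQ 0 j (by omega)
            omega
          have hjne : j.val ≠ 0 := by
            intro hc
            have : j = 0 := Fin.ext (by omega)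
            rw [this] at hj0'
            omega
          have : j = 1 := Fin.ext (by omega)
          rw [← this]
          exact hj0'
        have hπ0 : (π 0).val = 1 := by
          set j := π⁻¹ 1 with hj
          have hj0 : π j = 1 := π.apply_symm_apply 1
          have hj1 : (π j).val = 1 := by rw [hj0]; exact hone
          have hjle : j.val ≤ 1 := by
            by_contra hc
            have := hQ 0 j (by omega)
            omega
          have hjne : j.val ≠ 1 := by
            intro hc
            have : j = 1 := Fin.ext (by omega)
            rw [this] at hj1
            omega
          have : j = 0 := Fin.ext (by omega)
          rw [this] at hj1
          exact hj1
        have hm : ∀ j : Fin (k+1), j.val < 2 ↔ (π j).val < 2 := by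
          intro j
          constructor
          · intro hj
            have hj2 : j.val = 0 ∨ j.val = 1 := by omega
            rcases hj2 with hj' | hj'
            · have : j = 0 := Fin.ext (by omega)
              rw [this]; omega
            · have : j = 1 := Fin.ext (by omega)
              rw [this]; omega
          · intro hj
            have hj2 : (π j).val = 0 ∨ (π j).val = 1 := by omega
            rcases hj2 with hj' | hj'
            · have : π j = π 1 := Fin.ext (by omega)
              have := π.injective this
              rw [this]; omega
            · have : π j = π 0 := Fin.ext (by omega)
              have := π.injective this
              rw [this]; omega
        obtain ⟨k', rfl⟩ : ∃ k', k = k' + 1 := ⟨k - 1, by omega⟩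
        obtain ⟨σ, τ, hσ, hτ, heq⟩ := decomp (show k'+1+1 = 2 + k' by omega) π hm
        have hQτ : Qprop τ := by
          intro i j hij
          have h1 := hτ i
          have h2 := hτ j
          have := hQ ⟨2 + i.val, by omega⟩ ⟨2 + j.val, by omega⟩ (by simp; omega)
          omega
        obtain ⟨L', hb, hf⟩ := ih k' (by omega) τ hQτ
        refine ⟨⟨2, Fin.revPerm⟩ :: L', ?_, ?_⟩
        · rintro q hq
          rcases List.mem_cons.1 hq with rfl | hq
          · exact ⟨by norm_num, le_refl 2, rfl⟩
          · exact hb q hq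
        · show SPerm.comp ⟨2, Fin.revPerm⟩ (L'.foldr SPerm.comp ⟨0, 1⟩) = _; rw [hf]
          have e0 : ((σ 0 : Fin 2) : ℕ) = 1 := by
            have h := hσ 0
            simp only [Fin.val_zero, Fin.mk_zero] at h
            rw [h]
            exact hπ0
          have e1 : ((σ 1 : Fin 2) : ℕ) = 0 := by
            have h := hσ 1
            simp only [Fin.val_one, Fin.mk_one] at h
            rw [h]
            exact hπ1
          have hσrev : σ = (Fin.revPerm : Equiv.Perm (Fin 2)) := by
            apply Equiv.ext
            intro x
            apply Fin.ext
            fin_cases x <;> simp only [Fin.mk_zero, Fin.mk_one] <;>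
              first
                | (rw [e0]; decide)
                | (rw [e1]; decide)
          rw [← hσrev]
          exact heq.symm

lemma numOcc_ne_zero {n : ℕ} (σ : Equiv.Perm (Fin 3)) (π : Equiv.Perm (Fin n))
    (a b c : Fin n) (hab : a < b) (hbc : b < c)
    (hiff : ∀ j k : Fin 3, π (![a,b,c] j) < π (![a,b,c] k) ↔ σ j < σ k) :
    numOcc σ π ≠ 0 := by
  have hsm : StrictMono ![a,b,c] := by
    intro x y hxy
    fin_cases x <;> fin_cases y <;>
      simp_all [Matrix.cons_val_zero, Matrix.cons_val_one, Matrix.head_cons] <;>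
      first | exact hab | exact hbc | exact hab.trans hbc
  haveI : Finite {f : Fin 3 → Fin n // IsOccurrence σ π f} := Subtype.finite
  have hne : Nonempty {f : Fin 3 → Fin n // IsOccurrence σ π f} := ⟨![a,b,c], hsm, hiff⟩
  unfold numOcc
  exact Nat.card_pos.ne'

lemma not_Q_occ {n : ℕ} (π : Equiv.Perm (Fin n)) (hQ : ¬ Qprop π) :
    numOcc p231 π ≠ 0 ∨ numOcc p312 π ≠ 0 ∨ numOcc p321 π ≠ 0 := by
  unfold Qprop at hQ
  push_neg at hQ
  obtain ⟨i, k, hik, hv⟩ := hQ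
  obtain ⟨b, hbv⟩ : ∃ b : Fin n, b.val = i.val + 1 := ⟨⟨i.val + 1, by omega⟩, rfl⟩
  have hab : i < b := by rw [Fin.lt_def]; omega
  have hbc : b < k := by rw [Fin.lt_def]; omega
  have hne1 : (π i).val ≠ (π b).val := by
    intro h
    have := congrArg Fin.val (π.injective (Fin.ext h))
    omega
  have hne2 : (π b).val ≠ (π k).val := by
    intro h
    have := congrArg Fin.val (π.injective (Fin.ext h))
    omega
  have hne3 : (π i).val ≠ (π k).val := by
    intro h
    have := congrArg Fin.val (π.injective (Fin.ext h))
    omega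
  have hki : (π k).val < (π i).val := by omega
  rcases lt_or_ge (π i).val (π b).val with hmid | hmid
  · left
    refine numOcc_ne_zero p231 π i b k hab hbc ?_
    have e0 : ((p231 0).val) = 1 := by decide
    have e1 : ((p231 1).val) = 2 := by decide
    have e2 : ((p231 2).val) = 0 := by decide
    intro x y
    fin_cases x <;> fin_cases y <;>
      simp only [Fin.mk_zero, Fin.mk_one, show (⟨2, by omega⟩ : Fin 3) = 2 from rfl,
        Matrix.cons_val_zero, Matrix.cons_val_one, Matrix.head_cons,
        Matrix.cons_val_two, Matrix.tail_cons, Fin.lt_def] <;>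
      omega
  rcases lt_or_ge (π b).val (π k).val with hmid2 | hmid2
  · right; left
    refine numOcc_ne_zero p312 π i b k hab hbc ?_
    have e0 : ((p312 0).val) = 2 := by decide
    have e1 : ((p312 1).val) = 0 := by decide
    have e2 : ((p312 2).val) = 1 := by decide
    intro x y
    fin_cases x <;> fin_cases y <;>
      simp only [Fin.mk_zero, Fin.mk_one, show (⟨2, by omega⟩ : Fin 3) = 2 from rfl,
        Matrix.cons_val_zero, Matrix.cons_val_one, Matrix.head_cons,
        Matrix.cons_val_two, Matrix.tail_cons, Fin.lt_def] <;>
      omega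
  · right; right
    refine numOcc_ne_zero p321 π i b k hab hbc ?_
    have e0 : ((p321 0).val) = 2 := by decide
    have e1 : ((p321 1).val) = 1 := by decide
    have e2 : ((p321 2).val) = 0 := by decide
    intro x y
    fin_cases x <;> fin_cases y <;>
      simp only [Fin.mk_zero, Fin.mk_one, show (⟨2, by omega⟩ : Fin 3) = 2 from rfl,
        Matrix.cons_val_zero, Matrix.cons_val_one, Matrix.head_cons,
        Matrix.cons_val_two, Matrix.tail_cons, Fin.lt_def] <;>
      omega

lemma numOcc_eq_zero {n : ℕ} (σ : Equiv.Perm (Fin 3)) (π : Equiv.Perm (Fin n))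
    (hσ : ¬ σ 0 < σ 2) (hQ : Qprop π) : numOcc σ π = 0 := by
  unfold numOcc
  rw [Nat.card_eq_zero]
  left
  constructor
  rintro ⟨f, hf, hiff⟩
  have h01 := hf (show (0:Fin 3) < 1 by decide)
  have h12 := hf (show (1:Fin 3) < 2 by decide)
  rw [Fin.lt_def] at h01 h12
  have h02 : (f 0).val + 2 ≤ (f 2).val := by omega
  exact hσ ((hiff 0 2).1 (Fin.lt_def.2 (hQ _ _ h02)))

theorem avoids_231_312_321_iff_blocks_short_decreasing {n : ℕ} (π : Equiv.Perm (Fin n)) :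
    (numOcc p231 π = 0 ∧ numOcc p312 π = 0 ∧ numOcc p321 π = 0) ↔
      ∃ L : List SPerm,
        (∀ q ∈ L, 1 ≤ q.1 ∧ q.1 ≤ 2 ∧ q.2 = (Fin.revPerm : Equiv.Perm (Fin q.1))) ∧
        L.foldr SPerm.comp ⟨0, 1⟩ = ⟨n, π⟩ := by
  constructor
  · rintro ⟨h1, h2, h3⟩
    have hQ : Qprop π := by
      by_contra hq
      rcases not_Q_occ π hq with h | h | h
      · exact h h1
      · exact h h2
      · exact h h3
    exact exists_list n π hQ
  · rintro ⟨L, hb, hf⟩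
    have hQS := QS_foldr L (fun q hq => (hb q hq).2.1)
    rw [hf] at hQS
    have hQ : Qprop π := hQS
    exact ⟨numOcc_eq_zero _ _ (by decide) hQ, numOcc_eq_zero _ _ (by decide) hQ,
      numOcc_eq_zero _ _ (by decide) hQ⟩
end
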